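/- Let F : ℝ → ℝ be locally Lipschitz with F(0) = 0. Suppose liminf_{s→0⁺} max{ξ : ξ ∈ ∂F(s)}/s < 0 and limsup_{s→0⁺} F(s)/s² = +∞, where ∂F denotes the Clarke generalized gradient. Then 0 ∈ ∂F(0). -/

import Mathlib

open Filter Topology

/-- Clarke's generalized directional derivative of `f : ℝ → ℝ` at `x` in direction `v`. -/
noncomputable def clarkeDeriv (f : ℝ → ℝ) (x v : ℝ) : ℝ :=
  Filter.limsup (fun p : ℝ × ℝ => (f (p.1 + p.2 * v) - f p.1) / p.2)
    ((𝓝 x) ×ˢ (𝓝[>] (0 : ℝ)))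

/-- Clarke's generalized gradient of `f : ℝ → ℝ` at `x`. -/
noncomputable def clarkeGrad (f : ℝ → ℝ) (x : ℝ) : Set ℝ :=
  {ξ : ℝ | ∀ v : ℝ, ξ * v ≤ clarkeDeriv f x v}

open Metric Set

namespace ClarkeAux

def LL (x : ℝ) : Filter (ℝ × ℝ) := (𝓝 x) ×ˢ (𝓝[>] (0 : ℝ))

noncomputable def qq (f : ℝ → ℝ) (v : ℝ) (p : ℝ × ℝ) : ℝ := (f (p.1 + p.2 * v) - f p.1) / p.2

lemma clarkeDeriv_eq (f : ℝ → ℝ) (x v : ℝ) :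
    clarkeDeriv f x v = Filter.limsup (qq f v) (LL x) := rfl

instance (x : ℝ) : (LL x).NeBot := by
  unfold LL; infer_instance

lemma qq_abs_bound {F : ℝ → ℝ} (hF : LocallyLipschitz F) (x v : ℝ) :
    ∃ K : ℝ, ∀ᶠ p in LL x, |qq F v p| ≤ K := by
  obtain ⟨K, t, ht, hK⟩ := hF x
  obtain ⟨ε, hε, hball⟩ := Metric.mem_nhds_iff.1 ht
  refine ⟨(K : ℝ) * |v|, ?_⟩
  have h1 : Metric.ball x (ε / 2) ∈ 𝓝 x := Metric.ball_mem_nhds _ (by positivity)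
  have h2 : Set.Ioo (0 : ℝ) (ε / (2 * (|v| + 1))) ∈ 𝓝[>] (0 : ℝ) :=
    Ioo_mem_nhdsGT_of_mem ⟨le_refl _, by positivity⟩
  filter_upwards [Filter.prod_mem_prod h1 h2] with p hp
  obtain ⟨hz, hτ⟩ := hp
  have hτ0 : 0 < p.2 := hτ.1
  have hτv : p.2 * |v| < ε / 2 := by
    calc p.2 * |v| ≤ p.2 * (|v| + 1) := by nlinarith [abs_nonneg v]
    _ < (ε / (2 * (|v| + 1))) * (|v| + 1) := by
        apply mul_lt_mul_of_pos_right hτ.2; positivity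
    _ = ε / 2 := by field_simp
  have hz' : p.1 ∈ t := hball (by
    simp only [Metric.mem_ball, Real.dist_eq] at hz ⊢; linarith)
  have hzv : p.1 + p.2 * v ∈ t := hball (by
    simp only [Metric.mem_ball, Real.dist_eq] at hz ⊢
    calc |p.1 + p.2 * v - x| ≤ |p.1 - x| + |p.2 * v| := by
          rw [show p.1 + p.2 * v - x = (p.1 - x) + p.2 * v by ring]; exact abs_add_le _ _
    _ < ε / 2 + ε / 2 := by
          rw [abs_mul, abs_of_pos hτ0]; exact add_lt_add hz hτv
    _ = ε := by ring)
  have hd := hK.dist_le_mul _ hzv _ hz'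
  rw [Real.dist_eq, Real.dist_eq] at hd
  have hnum : |F (p.1 + p.2 * v) - F p.1| ≤ (K : ℝ) * |v| * p.2 := by
    calc |F (p.1 + p.2 * v) - F p.1| ≤ (K : ℝ) * |p.1 + p.2 * v - p.1| := hd
    _ = (K : ℝ) * (p.2 * |v|) := by
        rw [show p.1 + p.2 * v - p.1 = p.2 * v by ring, abs_mul, abs_of_pos hτ0]
    _ = (K : ℝ) * |v| * p.2 := by ring
  rw [qq, abs_div, abs_of_pos hτ0, div_le_iff₀ hτ0]
  exact hnum

lemma qq_bddle {F : ℝ → ℝ} (hF : LocallyLipschitz F) (x v : ℝ) :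
    IsBoundedUnder (· ≤ ·) (LL x) (qq F v) := by
  obtain ⟨K, hK⟩ := qq_abs_bound hF x v
  exact ⟨K, hK.mono fun p hp => (abs_le.1 hp).2⟩

lemma qq_bddge {F : ℝ → ℝ} (hF : LocallyLipschitz F) (x v : ℝ) :
    IsBoundedUnder (· ≥ ·) (LL x) (qq F v) := by
  obtain ⟨K, hK⟩ := qq_abs_bound hF x v
  exact ⟨-K, hK.mono fun p hp => (abs_le.1 hp).1⟩

end ClarkeAux
namespace ClarkeAux

lemma neg_limsup_le {α : Type*} {l : Filter α} [l.NeBot] {u : α → ℝ}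
    (h1 : IsBoundedUnder (· ≤ ·) l u) (h2 : IsBoundedUnder (· ≥ ·) l u) :
    -Filter.limsup u l ≤ Filter.limsup (fun a => -u a) l := by
  by_contra hcon
  push_neg at hcon
  obtain ⟨c, hc1, hc2⟩ := exists_between hcon
  have hb : IsBoundedUnder (· ≤ ·) l (fun a => -u a) := by
    obtain ⟨b, hb⟩ := h2
    rw [Filter.eventually_map] at hb
    exact ⟨-b, by rw [Filter.eventually_map]; filter_upwards [hb] with a ha using by simpa using neg_le_neg ha⟩
  have hev : ∀ᶠ a in l, -u a < c := eventually_lt_of_limsup_lt hc1 hb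
  have hfr : ∃ᶠ a in l, -c ≤ u a := (hev.mono fun a ha => by linarith).frequently
  have := le_limsup_of_frequently_le hfr h1
  linarith

lemma tendsto_phi (x v : ℝ) :
    Filter.Tendsto (fun p : ℝ × ℝ => (p.1 + p.2 * v, p.2)) (LL x) (LL x) := by
  apply Filter.Tendsto.prodMk _ tendsto_snd
  have h1 : Filter.Tendsto (fun p : ℝ × ℝ => p.1) (LL x) (𝓝 x) := tendsto_fst
  have h2 : Filter.Tendsto (fun p : ℝ × ℝ => p.2 * v) (LL x) (𝓝 0) := by
    have : Filter.Tendsto (fun p : ℝ × ℝ => p.2) (LL x) (𝓝 (0 : ℝ)) :=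
      tendsto_snd.mono_right nhdsWithin_le_nhds
    simpa using this.mul_const v
  simpa [LL] using h1.add h2

/-- Subadditivity consequence: `-D(v) ≤ D(-v)`. -/
lemma neg_clarkeDeriv_le {F : ℝ → ℝ} (hF : LocallyLipschitz F) (x v : ℝ) :
    -clarkeDeriv F x v ≤ clarkeDeriv F x (-v) := by
  set φ : ℝ × ℝ → ℝ × ℝ := fun p => (p.1 + p.2 * v, p.2) with hφdef
  have hφ : Filter.Tendsto φ (LL x) (LL x) := tendsto_phi x v
  have hcomp : ∀ p : ℝ × ℝ, qq F (-v) (φ p) = -qq F v p := by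
    intro p
    simp only [qq, hφdef]
    rw [show p.1 + p.2 * v + p.2 * -v = p.1 by ring, ← neg_div, neg_sub]
  have h1 : -clarkeDeriv F x v ≤ Filter.limsup (fun p => -qq F v p) (LL x) := by
    rw [clarkeDeriv_eq]
    exact neg_limsup_le (qq_bddle hF x v) (qq_bddge hF x v)
  have h2 : Filter.limsup (fun p => -qq F v p) (LL x)
      = Filter.limsup (qq F (-v)) (Filter.map φ (LL x)) := by
    rw [← Filter.limsup_comp]
    congr 1
    funext p
    exact (hcomp p).symm
  have hmapbdd : IsBoundedUnder (· ≥ ·) (Filter.map φ (LL x)) (qq F (-v)) :=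
    (qq_bddge hF x (-v)).mono hφ
  have hmapne : (Filter.map φ (LL x)).NeBot := Filter.NeBot.map inferInstance φ
  have h3 : Filter.limsup (qq F (-v)) (Filter.map φ (LL x))
      ≤ Filter.limsup (qq F (-v)) (LL x) :=
    Filter.limsup_le_limsup_of_le hφ hmapbdd.isCoboundedUnder_le (qq_bddle hF x (-v))
  rw [clarkeDeriv_eq F x (-v)]
  linarith

end ClarkeAux
namespace ClarkeAux

lemma tendsto_psi (x c : ℝ) (hc : 0 < c) :
    Filter.Tendsto (fun p : ℝ × ℝ => (p.1, p.2 * c)) (LL x) (LL x) := by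
  apply Filter.Tendsto.prodMk tendsto_fst
  rw [tendsto_nhdsWithin_iff]
  constructor
  · have : Filter.Tendsto (fun p : ℝ × ℝ => p.2) (LL x) (𝓝 (0 : ℝ)) :=
      tendsto_snd.mono_right nhdsWithin_le_nhds
    simpa [LL] using this.mul_const c
  · have h : ∀ᶠ p : ℝ × ℝ in LL x, p.2 ∈ Set.Ioi (0 : ℝ) :=
      tendsto_snd (self_mem_nhdsWithin)
    filter_upwards [h] with p hp
    exact mul_pos hp hc

lemma map_psi_eq (x c : ℝ) (hc : 0 < c) :
    Filter.map (fun p : ℝ × ℝ => (p.1, p.2 * c)) (LL x) = LL x := by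
  refine le_antisymm (tendsto_psi x c hc) ?_
  have h' := tendsto_psi x c⁻¹ (inv_pos.2 hc)
  calc LL x = Filter.map (fun p : ℝ × ℝ => (p.1, p.2 * c))
        (Filter.map (fun p : ℝ × ℝ => (p.1, p.2 * c⁻¹)) (LL x)) := by
        rw [Filter.map_map]
        have : ((fun p : ℝ × ℝ => (p.1, p.2 * c)) ∘ fun p : ℝ × ℝ => (p.1, p.2 * c⁻¹)) = id := by
          funext p
          simp only [Function.comp_apply, id_eq]
          ext
          · rfl
          · simp only
            field_simp
        rw [this, Filter.map_id]
  _ ≤ Filter.map (fun p : ℝ × ℝ => (p.1, p.2 * c)) (LL x) := Filter.map_mono h'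

lemma clarkeDeriv_smul {F : ℝ → ℝ} (hF : LocallyLipschitz F) (x v t : ℝ) (ht : 0 < t) :
    clarkeDeriv F x (t * v) = t * clarkeDeriv F x v := by
  set ψ : ℝ × ℝ → ℝ × ℝ := fun p => (p.1, p.2 * t) with hψdef
  have hmap : Filter.map ψ (LL x) = LL x := map_psi_eq x t ht
  have hid : ∀ p : ℝ × ℝ, qq F (t * v) p = t * qq F v (ψ p) := by
    intro p
    simp only [qq, hψdef]
    rw [show p.1 + p.2 * t * v = p.1 + p.2 * (t * v) by ring]
    rcases eq_or_ne p.2 0 with h | h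
    · simp [h]
    · field_simp
  obtain ⟨K, hK⟩ := qq_abs_bound hF x v
  have hK2 : ∀ᶠ p in LL x, |qq F v (ψ p)| ≤ K := by
    have h : ∀ᶠ p in Filter.map ψ (LL x), |qq F v p| ≤ K := by rw [hmap]; exact hK
    exact Filter.eventually_map.1 h
  have hu : IsBoundedUnder (· ≤ ·) (LL x) (fun p => qq F v (ψ p)) :=
    ⟨K, hK2.mono fun p hp => (abs_le.1 hp).2⟩
  have hu_ge : IsBoundedUnder (· ≥ ·) (LL x) (fun p => qq F v (ψ p)) :=
    ⟨-K, hK2.mono fun p hp => (abs_le.1 hp).1⟩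
  have hgu : IsBoundedUnder (· ≤ ·) (LL x) (fun p => t * qq F v (ψ p)) :=
    ⟨t * K, hK2.mono fun p hp =>
      mul_le_mul_of_nonneg_left (le_trans (le_abs_self _) hp) ht.le⟩
  have hgu_ge : IsBoundedUnder (· ≥ ·) (LL x) (fun p => t * qq F v (ψ p)) :=
    ⟨t * (-K), hK2.mono fun p hp =>
      mul_le_mul_of_nonneg_left (neg_le_of_abs_le hp) ht.le⟩
  have key := (OrderIso.mulLeft₀ t ht).limsup_apply (f := LL x)
      (u := fun p => qq F v (ψ p)) hu hu_ge.isCoboundedUnder_le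
      (by simpa using hgu) (by simpa using hgu_ge.isCoboundedUnder_le)
  simp only [OrderIso.mulLeft₀_apply] at key
  have hlim : Filter.limsup (fun p => qq F v (ψ p)) (LL x) = Filter.limsup (qq F v) (LL x) := by
    rw [show (fun p => qq F v (ψ p)) = qq F v ∘ ψ from rfl, Filter.limsup_comp, hmap]
  rw [clarkeDeriv_eq, clarkeDeriv_eq]
  calc Filter.limsup (qq F (t * v)) (LL x)
      = Filter.limsup (fun p => t * qq F v (ψ p)) (LL x) := by
        congr 1; funext p; exact hid p
  _ = t * Filter.limsup (fun p => qq F v (ψ p)) (LL x) := key.symm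
  _ = t * Filter.limsup (qq F v) (LL x) := by rw [hlim]

lemma clarkeDeriv_zero {F : ℝ → ℝ} (x : ℝ) : clarkeDeriv F x 0 = 0 := by
  rw [clarkeDeriv_eq]
  have : qq F 0 = fun _ : ℝ × ℝ => (0 : ℝ) := by
    funext p; simp [qq]
  rw [this, Filter.limsup_const]

end ClarkeAux

theorem stmt0 (F : ℝ → ℝ) (hF : LocallyLipschitz F) (hF0 : F 0 = 0)
    (hlow : Filter.liminf (fun s => sSup (clarkeGrad F s) / s) (𝓝[>] (0 : ℝ)) < 0)
    (hup : Filter.limsup (fun s => ((F s / s ^ 2 : ℝ) : EReal)) (𝓝[>] (0 : ℝ)) = ⊤) :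
    (0 : ℝ) ∈ clarkeGrad F 0 := by
  intro v
  rw [zero_mul]
  rcases lt_trichotomy v 0 with hv | hv | hv
  · -- v < 0 : use hlow
    by_contra hcon
    push_neg at hcon
    set b := clarkeDeriv F 0 v / 2 with hbdef
    have hbneg : b < 0 := by simp only [hbdef]; linarith
    have hb : clarkeDeriv F 0 v < b := by simp only [hbdef]; linarith
    rw [ClarkeAux.clarkeDeriv_eq] at hb
    have hev : ∀ᶠ p in ClarkeAux.LL 0, ClarkeAux.qq F v p < b :=
      Filter.eventually_lt_of_limsup_lt hb (ClarkeAux.qq_bddle hF 0 v)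
    rw [ClarkeAux.LL, Filter.eventually_prod_iff] at hev
    obtain ⟨pa, hpa, pb, hpb, hP⟩ := hev
    obtain ⟨ε, hε, hball⟩ := Metric.mem_nhds_iff.1 hpa
    obtain ⟨δ, hδ, hsub⟩ := mem_nhdsGT_iff_exists_Ioo_subset.1 hpb
    have hw : 0 < -v := by linarith
    have hvne : v ≠ 0 := ne_of_lt hv
    have key : ∀ s : ℝ, |s| < ε → 0 < sSup (clarkeGrad F s) := by
      intro s hs
      have hball_nhds : Metric.ball (0 : ℝ) ε ∈ 𝓝 s :=
        Metric.isOpen_ball.mem_nhds (by simpa [Metric.mem_ball, Real.dist_eq] using hs)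
      have hIoo : Set.Ioo (0 : ℝ) δ ∈ 𝓝[>] (0 : ℝ) := Ioo_mem_nhdsGT_of_mem ⟨le_refl _, hδ⟩
      have hevs : ∀ᶠ p in ClarkeAux.LL s, ClarkeAux.qq F v p ≤ b := by
        rw [ClarkeAux.LL]
        filter_upwards [Filter.prod_mem_prod hball_nhds hIoo] with p hp
        have := hP (hball hp.1) (hsub hp.2)
        simpa using le_of_lt this
      have hDs : clarkeDeriv F s v ≤ b := by
        rw [ClarkeAux.clarkeDeriv_eq]
        exact Filter.limsup_le_of_le (ClarkeAux.qq_bddge hF s v).isCoboundedUnder_le hevs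
      have hDneg : 0 < clarkeDeriv F s (-v) :=
        lt_of_lt_of_le (show (0 : ℝ) < -b by linarith)
          (le_trans (by linarith) (ClarkeAux.neg_clarkeDeriv_le hF s v))
      set ξ := clarkeDeriv F s (-v) / (-v) with hξdef
      have hξpos : 0 < ξ := div_pos hDneg hw
      have hmem : ξ ∈ clarkeGrad F s := by
        intro u
        rcases lt_trichotomy u 0 with hu | hu | hu
        · have ht : 0 < (-u) / (-v) := div_pos (by linarith) hw
          have h1 := ClarkeAux.clarkeDeriv_smul hF s (-v) ((-u) / (-v)) ht
          rw [div_mul_cancel₀ _ (neg_ne_zero.2 hvne)] at h1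
          have h2 := ClarkeAux.neg_clarkeDeriv_le hF s (-u)
          rw [neg_neg] at h2
          rw [h1] at h2
          have hξu : ξ * u = -(((-u) / (-v)) * clarkeDeriv F s (-v)) := by
            rw [hξdef]; ring
          linarith
        · simp [hu, ClarkeAux.clarkeDeriv_zero]
        · have ht : 0 < u / (-v) := div_pos hu hw
          have h1 := ClarkeAux.clarkeDeriv_smul hF s (-v) (u / (-v)) ht
          rw [div_mul_cancel₀ _ (neg_ne_zero.2 hvne)] at h1
          have hξu : ξ * u = (u / (-v)) * clarkeDeriv F s (-v) := by
            rw [hξdef]; ring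
          rw [hξu, h1]
      have hbdd : BddAbove (clarkeGrad F s) :=
        ⟨clarkeDeriv F s 1, fun ζ hζ => by simpa using hζ 1⟩
      exact lt_of_lt_of_le hξpos (le_csSup hbdd hmem)
    have hfreq : ∃ᶠ s in 𝓝[>] (0 : ℝ), sSup (clarkeGrad F s) / s < 0 := by
      by_contra hcon2
      rw [Filter.not_frequently] at hcon2
      have h0 : (0 : ℝ) ∈ {a : ℝ | ∀ᶠ s in 𝓝[>] (0 : ℝ), a ≤ sSup (clarkeGrad F s) / s} :=
        hcon2.mono fun s hs => not_lt.1 hs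
      rw [Filter.liminf_eq] at hlow
      by_cases hbd : BddAbove {a : ℝ | ∀ᶠ s in 𝓝[>] (0 : ℝ), a ≤ sSup (clarkeGrad F s) / s}
      · exact absurd (le_csSup hbd h0) (not_le.2 hlow)
      · rw [csSup_of_not_bddAbove hbd, Real.sSup_empty] at hlow
        exact lt_irrefl 0 hlow
    have hev3 : ∀ᶠ s in 𝓝[>] (0 : ℝ), 0 ≤ sSup (clarkeGrad F s) / s := by
      filter_upwards [Ioo_mem_nhdsGT_of_mem ⟨le_refl (0 : ℝ), hε⟩] with s hs
      exact le_of_lt (div_pos (key s (by rw [abs_of_pos hs.1]; exact hs.2)) hs.1)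
    obtain ⟨s, h1, h2⟩ := (hfreq.and_eventually hev3).exists
    linarith
  · rw [hv, ClarkeAux.clarkeDeriv_zero]
  · -- v > 0 : use hup
    by_contra hcon
    push_neg at hcon
    set b := clarkeDeriv F 0 v / 2 with hbdef
    have hbneg : b < 0 := by simp only [hbdef]; linarith
    have hb : clarkeDeriv F 0 v < b := by simp only [hbdef]; linarith
    rw [ClarkeAux.clarkeDeriv_eq] at hb
    have hev : ∀ᶠ p in ClarkeAux.LL 0, ClarkeAux.qq F v p < b :=
      Filter.eventually_lt_of_limsup_lt hb (ClarkeAux.qq_bddle hF 0 v)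
    rw [ClarkeAux.LL, Filter.eventually_prod_iff] at hev
    obtain ⟨pa, hpa, pb, hpb, hP⟩ := hev
    have hpa0 : pa 0 := hpa.self_of_nhds
    obtain ⟨δ, hδ, hsub⟩ := mem_nhdsGT_iff_exists_Ioo_subset.1 hpb
    have hvne : v ≠ 0 := ne_of_gt hv
    have hFneg : ∀ s : ℝ, 0 < s → s < δ * v → F s < 0 := by
      intro s hs1 hs2
      have hsv : 0 < s / v := div_pos hs1 hv
      have hsv2 : s / v < δ := by rw [div_lt_iff₀ hv]; linarith [mul_comm δ v]
      have h := hP hpa0 (hsub ⟨hsv, hsv2⟩)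
      rw [ClarkeAux.qq] at h
      simp only [hF0, zero_add, sub_zero] at h
      rw [div_mul_cancel₀ _ hvne] at h
      rw [div_lt_iff₀ hsv] at h
      calc F s < b * (s / v) := h
        _ < 0 := mul_neg_of_neg_of_pos hbneg hsv
    have hev2 : ∀ᶠ s in 𝓝[>] (0 : ℝ), ((F s / s ^ 2 : ℝ) : EReal) ≤ (0 : EReal) := by
      have hδv : (0 : ℝ) < δ * v := mul_pos hδ hv
      filter_upwards [Ioo_mem_nhdsGT_of_mem ⟨le_refl (0 : ℝ), hδv⟩] with s hs
      have hFs := hFneg s hs.1 hs.2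
      have h2 : F s / s ^ 2 ≤ 0 := le_of_lt (div_neg_of_neg_of_pos hFs (pow_pos hs.1 2))
      exact_mod_cast h2
    have hle : Filter.limsup (fun s => ((F s / s ^ 2 : ℝ) : EReal)) (𝓝[>] (0 : ℝ)) ≤ 0 :=
      Filter.limsup_le_of_le (by isBoundedDefault) hev2
    rw [hup] at hle
    simp at hle
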